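/- Let T and S be A-bounded operators on H admitting A-adjoints (i.e. there exist Ts, Ss with A∘Ts = T*∘A and A∘Ss = S*∘A). Then w_𝔸([[T,S],[T,S]]) ≤ w_A(T+S) + (1/2)·‖T−S‖_A. -/

import Mathlib

noncomputable def sInner {E : Type*} [NormedAddCommGroup E] [InnerProductSpace ℂ E]
    (A : E →L[ℂ] E) (x y : E) : ℂ := inner ℂ (A x) y

noncomputable def sNorm {E : Type*} [NormedAddCommGroup E] [InnerProductSpace ℂ E]
    (A : E →L[ℂ] E) (x : E) : ℝ := Real.sqrt (sInner A x x).re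

/-- The `A`-operator seminorm. -/
noncomputable def opSNorm {E : Type*} [NormedAddCommGroup E] [InnerProductSpace ℂ E]
    (A T : E →L[ℂ] E) : ℝ := sSup {c | ∃ x : E, sNorm A x = 1 ∧ c = sNorm A (T x)}

/-- The `A`-numerical radius. -/
noncomputable def numRad {E : Type*} [NormedAddCommGroup E] [InnerProductSpace ℂ E]
    (A T : E →L[ℂ] E) : ℝ := sSup {c | ∃ x : E, sNorm A x = 1 ∧ c = ‖sInner A (T x) x‖}

/-- `T` is `A`-bounded. -/
def ABounded {E : Type*} [NormedAddCommGroup E] [InnerProductSpace ℂ E]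
    (A T : E →L[ℂ] E) : Prop := ∃ c > 0, ∀ x : E, sNorm A (T x) ≤ c * sNorm A x

/-- The 2×2 block operator `[[T, X], [Y, S]]` on `H ⊕ H` (with the ℓ² product structure). -/
noncomputable def blk {H : Type*} [NormedAddCommGroup H] [InnerProductSpace ℂ H]
    (T X Y S : H →L[ℂ] H) : WithLp 2 (H × H) →L[ℂ] WithLp 2 (H × H) :=
  ((WithLp.prodContinuousLinearEquiv 2 ℂ H H).symm.toContinuousLinearMap.comp
    (((T.coprod X).prod (Y.coprod S)).comp
      (WithLp.prodContinuousLinearEquiv 2 ℂ H H).toContinuousLinearMap))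

/-- The diagonal operator `𝔸 = diag(A, A)` on `H ⊕ H`. -/
noncomputable def twoA {H : Type*} [NormedAddCommGroup H] [InnerProductSpace ℂ H]
    (A : H →L[ℂ] H) : WithLp 2 (H × H) →L[ℂ] WithLp 2 (H × H) := blk A 0 0 A

section aux
set_option linter.unusedSectionVars false
variable {E : Type*} [NormedAddCommGroup E] [InnerProductSpace ℂ E] [CompleteSpace E]

lemma sNorm_nonneg' (A : E →L[ℂ] E) (x : E) : 0 ≤ sNorm A x := Real.sqrt_nonneg _

lemma sInner_self_re_nonneg (A : E →L[ℂ] E) (hA : A.IsPositive) (x : E) :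
    0 ≤ (sInner A x x).re := by
  simpa [ContinuousLinearMap.reApplyInnerSelf, sInner] using hA.2 x

lemma sNorm_sq (A : E →L[ℂ] E) (hA : A.IsPositive) (x : E) :
    sNorm A x ^ 2 = (sInner A x x).re :=
  Real.sq_sqrt (sInner_self_re_nonneg A hA x)

set_option maxHeartbeats 1000000 in
set_option synthInstance.maxHeartbeats 1000000 in
lemma sInner_CS (A : E →L[ℂ] E) (hA : A.IsPositive) (x y : E) :
    ‖sInner A x y‖ ≤ sNorm A x * sNorm A y := by
  have hA' : 0 ≤ A := (ContinuousLinearMap.nonneg_iff_isPositive A).mpr hA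
  obtain ⟨B, hBsa, hB2⟩ : ∃ B : E →L[ℂ] E, IsSelfAdjoint B ∧ B * B = A :=
    ⟨CFC.sqrt A, (CFC.sqrt_nonneg (a := A)).isSelfAdjoint, CFC.sqrt_mul_sqrt_self A hA'⟩
  have hadj : ContinuousLinearMap.adjoint B = B := by
    rw [← ContinuousLinearMap.star_eq_adjoint]; exact hBsa
  have key : ∀ u v : E, sInner A u v = inner ℂ (B u) (B v) := by
    intro u v
    have h1 : A u = B (B u) := by rw [← hB2]; rfl
    rw [sInner, h1]
    conv_lhs => rw [show B (B u) = (ContinuousLinearMap.adjoint B) (B u) by rw [hadj]]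
    rw [ContinuousLinearMap.adjoint_inner_left]
  have hn : ∀ u : E, sNorm A u = ‖B u‖ := by
    intro u
    rw [sNorm, key u u]
    rw [show (inner ℂ (B u) (B u)).re = ‖B u‖ ^ 2 by simpa using @inner_self_eq_norm_sq ℂ E _ _ _ (B u)]
    exact Real.sqrt_sq (norm_nonneg _)
  rw [key, hn, hn]
  exact norm_inner_le_norm _ _

variable [CompleteSpace E]

lemma sNorm_add_le (A : E →L[ℂ] E) (hA : A.IsPositive) (x y : E) :
    sNorm A (x + y) ≤ sNorm A x + sNorm A y := by
  have h : sNorm A (x + y) ^ 2 ≤ (sNorm A x + sNorm A y) ^ 2 := by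
    rw [sNorm_sq A hA]
    have hexp : sInner A (x + y) (x + y)
        = sInner A x x + sInner A x y + sInner A y x + sInner A y y := by
      simp [sInner, map_add, inner_add_left, inner_add_right]; ring
    have h1 : (sInner A x y).re ≤ sNorm A x * sNorm A y :=
      (Complex.re_le_norm _).trans (sInner_CS A hA x y)
    have h2 : (sInner A y x).re ≤ sNorm A y * sNorm A x :=
      (Complex.re_le_norm _).trans (sInner_CS A hA y x)
    have hx2 := sNorm_sq A hA x
    have hy2 := sNorm_sq A hA y
    rw [hexp]
    simp only [Complex.add_re]
    nlinarith
  calc sNorm A (x + y) = Real.sqrt (sNorm A (x + y) ^ 2) :=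
        (Real.sqrt_sq (sNorm_nonneg' A _)).symm
    _ ≤ Real.sqrt ((sNorm A x + sNorm A y) ^ 2) := Real.sqrt_le_sqrt h
    _ = sNorm A x + sNorm A y := Real.sqrt_sq (add_nonneg (sNorm_nonneg' A x) (sNorm_nonneg' A y))

lemma sNorm_neg (A : E →L[ℂ] E) (x : E) : sNorm A (-x) = sNorm A x := by
  simp [sNorm, sInner]

lemma sNorm_real_smul (A : E →L[ℂ] E) (r : ℝ) (hr : 0 ≤ r) (x : E) :
    sNorm A ((r : ℂ) • x) = r * sNorm A x := by
  rw [sNorm, sNorm]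
  have : sInner A ((r : ℂ) • x) ((r : ℂ) • x) = (r : ℂ) ^ 2 * sInner A x x := by
    rw [sInner, sInner, map_smul, inner_smul_left, inner_smul_right, Complex.conj_ofReal]; ring
  rw [this]
  have : ((r : ℂ) ^ 2 * sInner A x x).re = r ^ 2 * (sInner A x x).re := by
    simp [Complex.mul_re, ← Complex.ofReal_pow]
  rw [this, Real.sqrt_mul (sq_nonneg r), Real.sqrt_sq hr]

lemma numRad_bddAbove (A X : E →L[ℂ] E) (hA : A.IsPositive) (hX : ABounded A X) :
    BddAbove {c | ∃ x : E, sNorm A x = 1 ∧ c = ‖sInner A (X x) x‖} := by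
  obtain ⟨c, hc0, hc⟩ := hX
  refine ⟨c, ?_⟩
  rintro b ⟨x, hx, rfl⟩
  calc ‖sInner A (X x) x‖ ≤ sNorm A (X x) * sNorm A x := sInner_CS A hA _ _
    _ ≤ (c * sNorm A x) * sNorm A x := by
        exact mul_le_mul_of_nonneg_right (hc x) (sNorm_nonneg' A x)
    _ = c := by rw [hx]; ring

lemma opSNorm_bddAbove (A X : E →L[ℂ] E) (hX : ABounded A X) :
    BddAbove {c | ∃ x : E, sNorm A x = 1 ∧ c = sNorm A (X x)} := by
  obtain ⟨c, hc0, hc⟩ := hX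
  refine ⟨c, ?_⟩
  rintro b ⟨x, hx, rfl⟩
  calc sNorm A (X x) ≤ c * sNorm A x := hc x
    _ = c := by rw [hx]; ring

lemma numRad_nonneg (A X : E →L[ℂ] E) (hA : A.IsPositive) (hX : ABounded A X) :
    0 ≤ numRad A X := by
  rcases Set.eq_empty_or_nonempty {c | ∃ x : E, sNorm A x = 1 ∧ c = ‖sInner A (X x) x‖} with h | h
  · rw [numRad, h, Real.sSup_empty]
  · obtain ⟨b, x, hx, rfl⟩ := h
    exact (norm_nonneg _).trans (le_csSup (numRad_bddAbove A X hA hX) ⟨x, hx, rfl⟩)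

lemma opSNorm_nonneg (A X : E →L[ℂ] E) (hX : ABounded A X) :
    0 ≤ opSNorm A X := by
  rcases Set.eq_empty_or_nonempty {c | ∃ x : E, sNorm A x = 1 ∧ c = sNorm A (X x)} with h | h
  · rw [opSNorm, h, Real.sSup_empty]
  · obtain ⟨b, x, hx, rfl⟩ := h
    exact (sNorm_nonneg' A _).trans (le_csSup (opSNorm_bddAbove A X hX) ⟨x, hx, rfl⟩)

lemma le_numRad (A X : E →L[ℂ] E) (hA : A.IsPositive) (hX : ABounded A X) (x : E) :
    ‖sInner A (X x) x‖ ≤ numRad A X * sNorm A x ^ 2 := by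
  by_cases h : sNorm A x = 0
  · rw [h]
    have := (sInner_CS A hA (X x) x)
    rw [h, mul_zero] at this
    simpa using this
  · set t := sNorm A x with ht
    have ht0 : 0 < t := lt_of_le_of_ne (sNorm_nonneg' A x) (Ne.symm h)
    set y := ((t⁻¹ : ℝ) : ℂ) • x with hy
    have hny : sNorm A y = 1 := by
      rw [hy, sNorm_real_smul A _ (by positivity), inv_mul_cancel₀ (ne_of_gt ht0)]
    have hval : ‖sInner A (X y) y‖ = t⁻¹ ^ 2 * ‖sInner A (X x) x‖ := by
      have : sInner A (X y) y = ((t⁻¹ : ℝ) : ℂ) ^ 2 * sInner A (X x) x := by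
        rw [hy, map_smul, sInner, sInner, map_smul, inner_smul_left, inner_smul_right,
          Complex.conj_ofReal]; ring
      rw [this, norm_mul]
      simp [← Complex.ofReal_pow, abs_of_pos (by positivity : (0:ℝ) < t⁻¹ ^ 2)]
    have hle : ‖sInner A (X y) y‖ ≤ numRad A X :=
      le_csSup (numRad_bddAbove A X hA hX) ⟨y, hny, rfl⟩
    rw [hval] at hle
    have := mul_le_mul_of_nonneg_left hle (by positivity : (0:ℝ) ≤ t ^ 2)
    calc ‖sInner A (X x) x‖ = t ^ 2 * (t⁻¹ ^ 2 * ‖sInner A (X x) x‖) := by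
          field_simp
      _ ≤ t ^ 2 * numRad A X := this
      _ = numRad A X * t ^ 2 := by ring

lemma le_opSNorm (A X : E →L[ℂ] E) (hX : ABounded A X) (x : E) :
    sNorm A (X x) ≤ opSNorm A X * sNorm A x := by
  by_cases h : sNorm A x = 0
  · obtain ⟨c, hc0, hc⟩ := hX
    have := hc x
    rw [h, mul_zero] at this
    rw [h, mul_zero]
    exact this
  · set t := sNorm A x with ht
    have ht0 : 0 < t := lt_of_le_of_ne (sNorm_nonneg' A x) (Ne.symm h)
    set y := ((t⁻¹ : ℝ) : ℂ) • x with hy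
    have hny : sNorm A y = 1 := by
      rw [hy, sNorm_real_smul A _ (by positivity), inv_mul_cancel₀ (ne_of_gt ht0)]
    have hval : sNorm A (X y) = t⁻¹ * sNorm A (X x) := by
      rw [hy, map_smul, sNorm_real_smul A _ (by positivity)]
    have hle : sNorm A (X y) ≤ opSNorm A X :=
      le_csSup (opSNorm_bddAbove A X hX) ⟨y, hny, rfl⟩
    rw [hval] at hle
    have := mul_le_mul_of_nonneg_left hle (le_of_lt ht0)
    calc sNorm A (X x) = t * (t⁻¹ * sNorm A (X x)) := by field_simp
      _ ≤ t * opSNorm A X := this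
      _ = opSNorm A X * t := by ring

end aux

theorem stmt8 {H : Type*} [NormedAddCommGroup H] [InnerProductSpace ℂ H] [CompleteSpace H]
    (A : H →L[ℂ] H) (hA : A.IsPositive)
    (T S : H →L[ℂ] H) (hT : ABounded A T) (hS : ABounded A S)
    (hTadm : ∃ Ts : H →L[ℂ] H, A.comp Ts = (ContinuousLinearMap.adjoint T).comp A)
    (hSadm : ∃ Ss : H →L[ℂ] H, A.comp Ss = (ContinuousLinearMap.adjoint S).comp A) :
    numRad (twoA A) (blk T S T S) ≤ numRad A (T + S) + (1 / 2) * opSNorm A (T - S) := by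
  -- A-boundedness of T+S and T-S
  have hTS : ABounded A (T + S) := by
    obtain ⟨c1, hc1, h1⟩ := hT
    obtain ⟨c2, hc2, h2⟩ := hS
    refine ⟨c1 + c2, by positivity, fun x => ?_⟩
    calc sNorm A ((T + S) x) = sNorm A (T x + S x) := rfl
      _ ≤ sNorm A (T x) + sNorm A (S x) := sNorm_add_le A hA _ _
      _ ≤ c1 * sNorm A x + c2 * sNorm A x := add_le_add (h1 x) (h2 x)
      _ = (c1 + c2) * sNorm A x := by ring
  have hTS' : ABounded A (T - S) := by
    obtain ⟨c1, hc1, h1⟩ := hT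
    obtain ⟨c2, hc2, h2⟩ := hS
    refine ⟨c1 + c2, by positivity, fun x => ?_⟩
    calc sNorm A ((T - S) x) = sNorm A (T x + -(S x)) := by rw [sub_eq_add_neg]; rfl
      _ ≤ sNorm A (T x) + sNorm A (-(S x)) := sNorm_add_le A hA _ _
      _ = sNorm A (T x) + sNorm A (S x) := by rw [sNorm_neg]
      _ ≤ c1 * sNorm A x + c2 * sNorm A x := add_le_add (h1 x) (h2 x)
      _ = (c1 + c2) * sNorm A x := by ring
  have hnr : 0 ≤ numRad A (T + S) := numRad_nonneg A _ hA hTS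
  have hop : 0 ≤ opSNorm A (T - S) := opSNorm_nonneg A _ hTS'
  apply Real.sSup_le
  · rintro b ⟨x, hx, rfl⟩
    set u := x.fst with hu
    set v := x.snd with hv
    -- compute the inner value
    have hblk : sInner (twoA A) ((blk T S T S) x) x
        = sInner A (T u + S v) (u + v) := by
      simp [blk, twoA, sInner, WithLp.prod_inner_apply, inner_add_right, inner_add_left, hu, hv]
    -- constraint
    have hcon : (sInner A u u).re + (sInner A v v).re = 1 := by
      have h2 : sNorm (twoA A) x ^ 2 = 1 := by rw [hx]; norm_num
      rw [sNorm, Real.sq_sqrt ?h1] at h2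
      · have : sInner (twoA A) x x = sInner A u u + sInner A v v := by
          simp [twoA, blk, sInner, WithLp.prod_inner_apply, hu, hv]
        rw [this] at h2
        simpa using h2
      · have : sInner (twoA A) x x = sInner A u u + sInner A v v := by
          simp [twoA, blk, sInner, WithLp.prod_inner_apply, hu, hv]
        rw [this, Complex.add_re]
        exact add_nonneg (sInner_self_re_nonneg A hA u) (sInner_self_re_nonneg A hA v)
    set w := u + v with hw
    set d := u - v with hd
    -- parallelogram
    have hpar : sNorm A w ^ 2 + sNorm A d ^ 2 = 2 := by
      rw [sNorm_sq A hA, sNorm_sq A hA, hw, hd]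
      have e1 : sInner A (u + v) (u + v)
          = sInner A u u + sInner A u v + sInner A v u + sInner A v v := by
        simp [sInner, map_add, inner_add_left, inner_add_right]; ring
      have e2 : sInner A (u - v) (u - v)
          = sInner A u u - sInner A u v - sInner A v u + sInner A v v := by
        simp [sInner, map_sub, inner_sub_left, inner_sub_right]; ring
      rw [e1, e2]
      simp only [Complex.add_re, Complex.sub_re]
      linarith
    -- decomposition
    have hdec : sInner A (T u + S v) w
        = (1 / 2 : ℂ) * (sInner A ((T + S) w) w + sInner A ((T - S) d) w) := by
      have hvec : (T + S) w + (T - S) d = (2 : ℂ) • (T u + S v) := by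
        simp [hw, hd, map_add, map_sub]
        module
      have : sInner A ((T + S) w) w + sInner A ((T - S) d) w
          = sInner A ((2 : ℂ) • (T u + S v)) w := by
        rw [← hvec]; simp [sInner, map_add, inner_add_left]
      rw [this]
      simp [sInner, map_add, map_smul, inner_add_left, inner_smul_left, map_ofNat]
      ring
    rw [hblk, hdec]
    have hb1 : ‖sInner A ((T + S) w) w‖ ≤ numRad A (T + S) * sNorm A w ^ 2 :=
      le_numRad A _ hA hTS w
    have hb2 : ‖sInner A ((T - S) d) w‖ ≤ opSNorm A (T - S) * sNorm A d * sNorm A w := by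
      calc ‖sInner A ((T - S) d) w‖ ≤ sNorm A ((T - S) d) * sNorm A w := sInner_CS A hA _ _
        _ ≤ (opSNorm A (T - S) * sNorm A d) * sNorm A w :=
            mul_le_mul_of_nonneg_right (le_opSNorm A _ hTS' d) (sNorm_nonneg' A w)
        _ = opSNorm A (T - S) * sNorm A d * sNorm A w := by ring
    have htri : ‖(1 / 2 : ℂ) * (sInner A ((T + S) w) w + sInner A ((T - S) d) w)‖
        ≤ (1 / 2) * (‖sInner A ((T + S) w) w‖ + ‖sInner A ((T - S) d) w‖) := by
      rw [norm_mul]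
      have : ‖(1 / 2 : ℂ)‖ = 1 / 2 := by norm_num
      rw [this]
      exact mul_le_mul_of_nonneg_left (norm_add_le _ _) (by norm_num)
    refine htri.trans ?_
    set a := sNorm A w with ha
    set b := sNorm A d with hbb
    have ha0 : 0 ≤ a := sNorm_nonneg' A w
    have hb0 : 0 ≤ b := sNorm_nonneg' A d
    have key : (1 / 2 : ℝ) * (numRad A (T + S) * a ^ 2 + opSNorm A (T - S) * b * a)
        ≤ numRad A (T + S) + (1 / 2) * opSNorm A (T - S) := by
      nlinarith [sq_nonneg (a - b), sq_nonneg a, sq_nonneg b,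
        mul_le_mul_of_nonneg_left (show a ^ 2 ≤ 2 by nlinarith [sq_nonneg b]) hnr,
        mul_le_mul_of_nonneg_left (show b * a ≤ 1 by nlinarith [sq_nonneg (a - b)]) hop]
    refine le_trans ?_ key
    have := add_le_add hb1 hb2
    nlinarith [this]
  · positivity
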